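/- Let G(s) = U + (L - s)·Φ(L - s) - (U - s)·Φ(U - s) + φ(L - s) - φ(U - s) with L < U, and for fixed vectors φₖ, θ*, θ with |⟨φₖ, θ⟩| ≤ M and |⟨φₖ, θ*⟩| ≤ M, define J(θ) = (G(⟨φₖ, θ*⟩) - G(⟨φₖ, θ⟩))². Then ⟨∇J(θ), θ - θ*⟩ ≥ c·J(θ), where c = inf_{|x| ≤ M} (Φ(U - x) - Φ(L - x)) > 0. -/

import Mathlib

open MeasureTheory ProbabilityTheory RealInnerProductSpace

/-- Standard normal cumulative distribution function. -/
noncomputable def stdPhi (x : ℝ) : ℝ := (gaussianReal 0 1 (Set.Iic x)).toReal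

/-- Standard normal probability density function. -/
noncomputable def stdpdf (x : ℝ) : ℝ :=
  (Real.sqrt (2 * Real.pi))⁻¹ * Real.exp (-x ^ 2 / 2)

lemma stdpdf_eq (x : ℝ) : gaussianPDFReal 0 1 x = stdpdf x := by
  simp [gaussianPDFReal, stdpdf]

lemma stdpdf_pos (x : ℝ) : 0 < stdpdf x := by
  rw [← stdpdf_eq]
  exact gaussianPDFReal_pos 0 1 x one_ne_zero

lemma stdpdf_cont : Continuous stdpdf := by
  unfold stdpdf
  fun_prop

lemma stdpdf_integrable : Integrable stdpdf := by
  have := integrable_gaussianPDFReal 0 1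
  simpa [funext stdpdf_eq] using this

lemma stdPhi_eq_integral (x : ℝ) : stdPhi x = ∫ t in Set.Iic x, stdpdf t := by
  rw [stdPhi, gaussianReal_apply_eq_integral 0 one_ne_zero,
    ENNReal.toReal_ofReal (integral_nonneg fun t => gaussianPDFReal_nonneg 0 1 t)]
  exact integral_congr_ae (Filter.Eventually.of_forall fun t => stdpdf_eq t)

lemma hasDerivAt_stdPhi (a : ℝ) : HasDerivAt stdPhi (stdpdf a) a := by
  have h : HasDerivAt (fun x => stdPhi 0 + ∫ t in (0:ℝ)..x, stdpdf t) (stdpdf a) a := by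
    refine HasDerivAt.const_add _ ?_
    exact intervalIntegral.integral_hasDerivAt_right
      stdpdf_integrable.intervalIntegrable
      stdpdf_cont.stronglyMeasurable.stronglyMeasurableAtFilter
      stdpdf_cont.continuousAt
  refine h.congr_of_eventuallyEq (Filter.Eventually.of_forall fun x => ?_)
  have key := intervalIntegral.integral_Iic_sub_Iic (a := (0:ℝ)) (b := x)
    stdpdf_integrable.integrableOn stdpdf_integrable.integrableOn (μ := volume)
  simp only [stdPhi_eq_integral]
  linarith

lemma stdPhi_cont : Continuous stdPhi :=
  continuous_iff_continuousAt.2 fun x => (hasDerivAt_stdPhi x).continuousAt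

lemma stdPhi_strictMono : StrictMono stdPhi := by
  intro a b hab
  have h : stdPhi b - stdPhi a = ∫ t in a..b, stdpdf t := by
    rw [stdPhi_eq_integral, stdPhi_eq_integral]
    exact intervalIntegral.integral_Iic_sub_Iic stdpdf_integrable.integrableOn
      stdpdf_integrable.integrableOn
  have hpos : 0 < ∫ t in a..b, stdpdf t :=
    intervalIntegral.intervalIntegral_pos_of_pos
      stdpdf_integrable.intervalIntegrable (fun t => stdpdf_pos t) hab
  linarith

lemma stdPhi_nonneg (x : ℝ) : 0 ≤ stdPhi x := ENNReal.toReal_nonneg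

lemma stdPhi_le_one (x : ℝ) : stdPhi x ≤ 1 := by
  rw [stdPhi]
  exact ENNReal.toReal_le_of_le_ofReal zero_le_one (by simpa using prob_le_one)

lemma hasDerivAt_stdpdf (x : ℝ) : HasDerivAt stdpdf (-x * stdpdf x) x := by
  have h : HasDerivAt (fun x : ℝ => -x ^ 2 / 2) (-x) x := by
    have := ((hasDerivAt_pow 2 x).neg).div_const 2
    simpa using this.congr_deriv (by ring)
  have h2 := (h.exp).const_mul (Real.sqrt (2 * Real.pi))⁻¹
  refine h2.congr_deriv ?_
  unfold stdpdf
  ring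

lemma hasDerivAt_G (L U : ℝ) (G : ℝ → ℝ)
    (hG : ∀ s, G s = U + (L - s) * stdPhi (L - s) - (U - s) * stdPhi (U - s)
        + stdpdf (L - s) - stdpdf (U - s)) (s : ℝ) :
    HasDerivAt G (stdPhi (U - s) - stdPhi (L - s)) s := by
  have hL : HasDerivAt (fun x : ℝ => L - x) (-1) s := by
    simpa using (hasDerivAt_id s).const_sub L
  have hU : HasDerivAt (fun x : ℝ => U - x) (-1) s := by
    simpa using (hasDerivAt_id s).const_sub U
  have hPhiL : HasDerivAt (fun x => stdPhi (L - x)) (stdpdf (L - s) * (-1)) s :=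
    (hasDerivAt_stdPhi (L - s)).comp s hL
  have hPhiU : HasDerivAt (fun x => stdPhi (U - x)) (stdpdf (U - s) * (-1)) s :=
    (hasDerivAt_stdPhi (U - s)).comp s hU
  have hpdfL : HasDerivAt (fun x => stdpdf (L - x)) ((-(L - s) * stdpdf (L - s)) * (-1)) s :=
    (hasDerivAt_stdpdf (L - s)).comp s hL
  have hpdfU : HasDerivAt (fun x => stdpdf (U - x)) ((-(U - s) * stdpdf (U - s)) * (-1)) s :=
    (hasDerivAt_stdpdf (U - s)).comp s hU
  have h1 := hL.mul hPhiL
  have h2 := hU.mul hPhiU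
  have hexp := ((((hasDerivAt_const s U).add h1).sub h2).add hpdfL).sub hpdfU
  have heq : (fun x : ℝ => U + (L - x) * stdPhi (L - x) - (U - x) * stdPhi (U - x)
      + stdpdf (L - x) - stdpdf (U - x)) = G := by
    funext x; rw [hG x]
  rw [← heq]
  refine hexp.congr_deriv ?_
  ring


theorem stmt4 {d : ℕ} (L U M : ℝ) (hLU : L < U) (G : ℝ → ℝ)
    (hG : ∀ s, G s = U + (L - s) * stdPhi (L - s) - (U - s) * stdPhi (U - s)
        + stdpdf (L - s) - stdpdf (U - s))
    (φk θstar θ : EuclideanSpace ℝ (Fin d))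
    (hθ : |⟪φk, θ⟫| ≤ M) (hθstar : |⟪φk, θstar⟫| ≤ M)
    (J : EuclideanSpace ℝ (Fin d) → ℝ)
    (hJ : J = fun ϑ => (G ⟪φk, θstar⟫ - G ⟪φk, ϑ⟫) ^ 2)
    (gradJ : EuclideanSpace ℝ (Fin d) → EuclideanSpace ℝ (Fin d))
    (hgrad : gradJ = fun ϑ =>
      (-2 * (G ⟪φk, θstar⟫ - G ⟪φk, ϑ⟫) *
        (stdPhi (U - ⟪φk, ϑ⟫) - stdPhi (L - ⟪φk, ϑ⟫))) • φk)
    (c : ℝ)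
    (hc : c = sInf ((fun x => stdPhi (U - x) - stdPhi (L - x)) '' Set.Icc (-M) M)) :
    0 < c ∧ ⟪gradJ θ, θ - θstar⟫ ≥ c * J θ := by
  set f : ℝ → ℝ := fun x => stdPhi (U - x) - stdPhi (L - x) with hf
  set s : ℝ := ⟪φk, θ⟫ with hs
  set t : ℝ := ⟪φk, θstar⟫ with ht
  have hsM := abs_le.1 hθ
  have htM := abs_le.1 hθstar
  have hfcont : Continuous f := by
    exact (stdPhi_cont.comp (continuous_const.sub continuous_id)).sub
      (stdPhi_cont.comp (continuous_const.sub continuous_id))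
  have hKcomp : IsCompact (f '' Set.Icc (-M) M) := isCompact_Icc.image hfcont
  have hKne : (f '' Set.Icc (-M) M).Nonempty :=
    ⟨f s, Set.mem_image_of_mem f ⟨hsM.1, hsM.2⟩⟩
  have hfpos : ∀ x : ℝ, 0 < f x := fun x => by
    have : stdPhi (L - x) < stdPhi (U - x) := stdPhi_strictMono (by linarith)
    simp only [hf]; linarith
  have hfle1 : ∀ x : ℝ, f x ≤ 1 := fun x => by
    have h1 := stdPhi_le_one (U - x)
    have h2 := stdPhi_nonneg (L - x)
    simp only [hf]; linarith
  have hcpos : 0 < c := by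
    obtain ⟨x₀, _, hx₀⟩ := hKcomp.sInf_mem hKne
    rw [hc, ← hx₀]
    exact hfpos x₀
  have hcle : ∀ x : ℝ, -M ≤ x → x ≤ M → c ≤ f x := fun x h1 h2 => by
    rw [hc]
    exact csInf_le hKcomp.bddBelow (Set.mem_image_of_mem f ⟨h1, h2⟩)
  refine ⟨hcpos, ?_⟩
  rw [hgrad, hJ]
  simp only [real_inner_smul_left, inner_sub_right, ← hs, ← ht]
  -- goal: -2 * (G t - G s) * f s * (s - t) ≥ c * (G t - G s)^2
  rcases eq_or_ne s t with heq | hne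
  · rw [heq]; simp
  · have hcfs := hcle s hsM.1 hsM.2
    -- MVT
    have hcontOn : ∀ a b : ℝ, ContinuousOn G (Set.Icc a b) := fun a b x _ =>
      (hasDerivAt_G L U G hG x).continuousAt.continuousWithinAt
    have hderiv : ∀ x : ℝ, HasDerivAt G (f x) x := hasDerivAt_G L U G hG
    obtain ⟨ξ, hξM1, hξM2, hq⟩ :
        ∃ ξ : ℝ, -M ≤ ξ ∧ ξ ≤ M ∧ f ξ = (G t - G s) / (t - s) := by
      rcases lt_or_gt_of_ne hne with hlt | hlt
      · obtain ⟨ξ, hmem, hξ⟩ := exists_hasDerivAt_eq_slope G f hlt (hcontOn s t)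
          (fun x _ => hderiv x)
        exact ⟨ξ, by linarith [hmem.1, hmem.2], by linarith [hmem.1, hmem.2], hξ⟩
      · obtain ⟨ξ, hmem, hξ⟩ := exists_hasDerivAt_eq_slope G f hlt (hcontOn t s)
          (fun x _ => hderiv x)
        refine ⟨ξ, by linarith [hmem.1, hmem.2], by linarith [hmem.1, hmem.2], ?_⟩
        rw [hξ, ← neg_sub (G s) (G t), ← neg_sub s t, neg_div_neg_eq]
    set q : ℝ := f ξ with hqdef
    have hGts : G t - G s = q * (t - s) := by
      rw [hq, div_mul_cancel₀ _ (sub_ne_zero.2 (Ne.symm hne))]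
    have hcq : c ≤ q := hcle ξ hξM1 hξM2
    have hq1 : q ≤ 1 := hfle1 ξ
    have hfspos := hfpos s
    rw [hGts, show stdPhi (U - s) - stdPhi (L - s) = f s from rfl]
    have hqpos : 0 < q := lt_of_lt_of_le hcpos hcq
    nlinarith [mul_nonneg (mul_nonneg (sub_nonneg.2 hcfs) (sq_nonneg q)) (sq_nonneg (t - s)),
      mul_nonneg (mul_nonneg (mul_nonneg hfspos.le hqpos.le)
        (by linarith : (0:ℝ) ≤ 2 - q)) (sq_nonneg (t - s))]
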